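/- For every nonnegative integer m, the elements 1, g(t), Dg(t), …, D^m g(t) of ℚ⟦t⟧ are linearly independent over ℚ[t]: if p(t), p_0(t), p_1(t), …, p_m(t) ∈ ℚ[t] satisfy p(t) + ∑_{j=0}^{m} p_j(t)·D^j g(t) = 0 in ℚ⟦t⟧, then p = p_0 = p_1 = ⋯ = p_m = 0. -/

import Mathlib

open Polynomial PowerSeries

/-- The Bernoulli generating series `h(t) = t/(e^t - 1)`. -/
noncomputable def hps : PowerSeries ℚ := bernoulliPowerSeries ℚ

/-- `g(t) = h(t) + t/2`. -/
noncomputable def gps : PowerSeries ℚ :=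
  hps + PowerSeries.C (1/2 : ℚ) * PowerSeries.X

/-- The derivation `D = t·(d/dt)` on `ℚ⟦t⟧`. -/
noncomputable def Dop (φ : PowerSeries ℚ) : PowerSeries ℚ :=
  PowerSeries.X * φ.derivativeFun

open Finset

lemma coeff_derivativeFun' (f : ℚ⟦X⟧) (n : ℕ) :
    PowerSeries.coeff n f.derivativeFun = PowerSeries.coeff (n + 1) f * (n + 1) :=
  PowerSeries.coeff_derivative f n

lemma derivativeFun_coe' (f : ℚ[X]) : (f : ℚ⟦X⟧).derivativeFun = (derivative f : ℚ⟦X⟧) :=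
  PowerSeries.derivative_coe f

/-! ### Auxiliary derivative lemmas -/

lemma derivativeFun_exp : (PowerSeries.exp ℚ).derivativeFun = PowerSeries.exp ℚ := by
  ext n
  rw [coeff_derivativeFun', PowerSeries.coeff_exp, PowerSeries.coeff_exp]
  have h1 : ((n+1).factorial : ℚ) = (n+1) * n.factorial := by
    exact_mod_cast Nat.factorial_succ n
  have h2 : (n.factorial : ℚ) ≠ 0 := Nat.cast_ne_zero.mpr n.factorial_ne_zero
  simp only [eq_ratCast, Rat.cast_id]
  rw [h1]
  field_simp

lemma derivativeFun_pow (f : PowerSeries ℚ) (k : ℕ) :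
    (f ^ (k+1)).derivativeFun = ((k:ℚ⟦X⟧) + 1) * f ^ k * f.derivativeFun := by
  induction k with
  | zero => simp
  | succ k ih =>
    have h : f ^ (k+2) = f ^ (k+1) * f := by ring
    rw [h, PowerSeries.derivativeFun_mul, ih]
    simp only [smul_eq_mul]
    push_cast
    ring

lemma exp_pow_ne_zero (k : ℕ) : (PowerSeries.exp ℚ) ^ k ≠ 0 := by
  intro h
  have := congrArg (PowerSeries.constantCoeff) h
  rw [map_pow, PowerSeries.constantCoeff_exp, one_pow, map_zero] at this
  exact one_ne_zero this

lemma coe_inj' {a : Polynomial ℚ} (h : (a : PowerSeries ℚ) = 0) : a = 0 := by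
  rwa [← Polynomial.coe_zero, Polynomial.coe_inj] at h

/-- A polynomial whose derivative is a nonzero scalar multiple of itself is zero. -/
lemma eig_zero (c : ℚ) (hc : c ≠ 0) (p : Polynomial ℚ)
    (hp : derivative p = Polynomial.C c * p) : p = 0 := by
  by_contra hne
  have h1 : (derivative p).coeff p.natDegree = p.coeff (p.natDegree + 1) * (p.natDegree + 1) :=
    Polynomial.coeff_derivative p p.natDegree
  have h2 : p.coeff (p.natDegree + 1) = 0 :=
    Polynomial.coeff_eq_zero_of_natDegree_lt (Nat.lt_succ_self _)
  rw [hp, Polynomial.coeff_C_mul, h2, zero_mul] at h1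
  exact (mul_ne_zero hc (Polynomial.leadingCoeff_ne_zero.mpr hne)) h1

lemma deriv_term (a : Polynomial ℚ) (k : ℕ) :
    ((a : ℚ⟦X⟧) * (PowerSeries.exp ℚ)^k).derivativeFun
      = ((derivative a + Polynomial.C (k:ℚ) * a : Polynomial ℚ) : ℚ⟦X⟧)
        * (PowerSeries.exp ℚ)^k := by
  rw [PowerSeries.derivativeFun_mul, derivativeFun_coe']
  cases k with
  | zero => simp [Polynomial.coe_add, PowerSeries.derivativeFun_one]
  | succ k =>
    rw [derivativeFun_pow, derivativeFun_exp]
    push_cast [Polynomial.coe_add, Polynomial.coe_mul, Polynomial.coe_C]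
    simp only [smul_eq_mul]
    have : PowerSeries.C ((k:ℚ)+1) = ((k:ℚ⟦X⟧)+1) := by simp
    rw [this]
    ring

lemma derivativeFun_zero' : (0 : ℚ⟦X⟧).derivativeFun = 0 := by
  ext n; rw [coeff_derivativeFun']; simp

lemma derivativeFun_sum (s : Finset ℕ) (f : ℕ → ℚ⟦X⟧) :
    (∑ i ∈ s, f i).derivativeFun = ∑ i ∈ s, (f i).derivativeFun := by
  classical
  induction s using Finset.induction with
  | empty => simpa using derivativeFun_zero'
  | insert _ _ hx ih => rw [Finset.sum_insert hx, Finset.sum_insert hx,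
      PowerSeries.derivativeFun_add, ih]

/-! ### Linear independence of powers of `exp` over `ℚ[t]` -/

lemma deriv_rel (N : ℕ) (a : ℕ → Polynomial ℚ)
    (h : ∑ k ∈ range (N+1), (a k : ℚ⟦X⟧) * PowerSeries.exp ℚ ^ k = 0) :
    ∑ k ∈ range (N+1),
      ((derivative (a k) + Polynomial.C ((k:ℚ) - N) * a k : Polynomial ℚ) : ℚ⟦X⟧)
        * PowerSeries.exp ℚ ^ k = 0 := by
  have hder := congrArg PowerSeries.derivativeFun h
  rw [derivativeFun_sum, derivativeFun_zero'] at hder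
  simp only [deriv_term] at hder
  have key : ∑ k ∈ range (N+1),
      ((derivative (a k) + Polynomial.C ((k:ℚ) - N) * a k : Polynomial ℚ) : ℚ⟦X⟧)
        * PowerSeries.exp ℚ ^ k
      = (∑ k ∈ range (N+1),
          ((derivative (a k) + Polynomial.C (k:ℚ) * a k : Polynomial ℚ) : ℚ⟦X⟧)
            * PowerSeries.exp ℚ ^ k)
        - PowerSeries.C (N:ℚ) * ∑ k ∈ range (N+1), (a k : ℚ⟦X⟧) * PowerSeries.exp ℚ ^ k := by
    rw [Finset.mul_sum, ← Finset.sum_sub_distrib]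
    refine Finset.sum_congr rfl fun k _ => ?_
    push_cast [Polynomial.coe_add, Polynomial.coe_mul, Polynomial.coe_C, map_sub]
    ring
  rw [key, hder, h, mul_zero, sub_zero]

lemma exp_li_finish (N : ℕ) (a : ℕ → Polynomial ℚ)
    (ihN : ∀ a' : ℕ → Polynomial ℚ,
      (∑ k ∈ range (N+1), (a' k : ℚ⟦X⟧) * PowerSeries.exp ℚ ^ k = 0) → ∀ k ≤ N, a' k = 0)
    (h : ∑ k ∈ range (N+2), (a k : ℚ⟦X⟧) * PowerSeries.exp ℚ ^ k = 0)
    (hder : derivative (a (N+1)) = 0) : ∀ k ≤ N+1, a k = 0 := by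
  have hb := deriv_rel (N+1) a h
  rw [Finset.sum_range_succ] at hb
  have htop : ((derivative (a (N+1))
      + Polynomial.C (((N+1:ℕ):ℚ) - ((N+1:ℕ):ℚ)) * a (N+1) : Polynomial ℚ) : ℚ⟦X⟧) = 0 := by
    rw [hder, sub_self, Polynomial.C_0, zero_mul, add_zero, Polynomial.coe_zero]
  rw [htop, zero_mul, add_zero] at hb
  have hz := ihN _ hb
  have hak : ∀ k ≤ N, a k = 0 := by
    intro k hk
    have h0 := hz k hk
    refine eig_zero (((N+1:ℕ):ℚ) - (k:ℚ)) ?_ (a k) ?_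
    · have : (k:ℚ) < ((N+1:ℕ):ℚ) := by exact_mod_cast Nat.lt_succ_of_le hk
      intro hcon; rw [sub_eq_zero] at hcon; exact absurd hcon.symm (ne_of_lt this)
    · have := eq_neg_of_add_eq_zero_left h0
      rw [this]
      rw [← neg_mul, ← Polynomial.C_neg, neg_sub]
  rw [Finset.sum_range_succ] at h
  have hzero : ∑ k ∈ range (N+1), ((a k : ℚ⟦X⟧)) * PowerSeries.exp ℚ ^ k = 0 :=
    Finset.sum_eq_zero fun k hk => by
      rw [hak k (Nat.lt_succ_iff.mp (Finset.mem_range.mp hk)), Polynomial.coe_zero, zero_mul]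
  rw [hzero, zero_add] at h
  have htopz : a (N+1) = 0 := by
    rcases mul_eq_zero.mp h with h' | h'
    · exact coe_inj' h'
    · exact absurd h' (exp_pow_ne_zero _)
  intro k hk
  rcases Nat.lt_succ_iff_lt_or_eq.mp (Nat.lt_succ_of_le hk) with h' | h'
  · exact hak k (Nat.lt_succ_iff.mp h')
  · rw [h']; exact htopz

lemma exp_li : ∀ (N : ℕ) (a : ℕ → Polynomial ℚ),
    (∑ k ∈ range (N+1), (a k : ℚ⟦X⟧) * PowerSeries.exp ℚ ^ k = 0) → ∀ k ≤ N, a k = 0 := by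
  intro N
  induction N with
  | zero =>
    intro a h k hk
    interval_cases k
    rw [Finset.sum_range_one, pow_zero, mul_one] at h
    exact coe_inj' h
  | succ N ihN =>
    suffices H : ∀ (d : ℕ) (a : ℕ → Polynomial ℚ), (a (N+1)).natDegree ≤ d →
        (∑ k ∈ range (N+2), (a k : ℚ⟦X⟧) * PowerSeries.exp ℚ ^ k = 0) → ∀ k ≤ N+1, a k = 0 by
      intro a h
      exact H (a (N+1)).natDegree a le_rfl h
    intro d
    induction d with
    | zero =>
      intro a hdeg h
      refine exp_li_finish N a ihN h ?_
      rw [Polynomial.eq_C_of_natDegree_eq_zero (Nat.le_zero.mp hdeg)]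
      simp
    | succ d ihd =>
      intro a hdeg h
      by_cases hder : derivative (a (N+1)) = 0
      · exact exp_li_finish N a ihN h hder
      · exfalso
        have hb := deriv_rel (N+1) a h
        set b : ℕ → Polynomial ℚ :=
          fun k => derivative (a k) + Polynomial.C ((k:ℚ) - ((N+1:ℕ):ℚ)) * a k with hbdef
        have hbN : b (N+1) = derivative (a (N+1)) := by
          simp [hbdef]
        have hbdeg : (b (N+1)).natDegree ≤ d := by
          rw [hbN]
          have h1 : (a (N+1)).natDegree ≠ 0 := by
            intro h0
            apply hder
            rw [Polynomial.eq_C_of_natDegree_eq_zero h0]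
            simp
          have := Polynomial.natDegree_derivative_lt h1
          omega
        have := ihd b hbdeg hb (N+1) le_rfl
        rw [hbN] at this
        exact hder this

/-! ### The map `Ψ` evaluating polynomials at `E = exp - 1` -/

noncomputable def Eps : PowerSeries ℚ := PowerSeries.exp ℚ - 1

noncomputable def Psi (q : Polynomial (Polynomial ℚ)) : PowerSeries ℚ :=
  Polynomial.eval₂ Polynomial.coeToPowerSeries.ringHom Eps q

lemma psiE_eq_zero (q : Polynomial (Polynomial ℚ))
    (h : Polynomial.eval₂ Polynomial.coeToPowerSeries.ringHom (PowerSeries.exp ℚ) q = 0) :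
    q = 0 := by
  rw [Polynomial.eval₂_eq_sum_range] at h
  have := exp_li q.natDegree (fun k => q.coeff k) (by
    simpa [Polynomial.coeToPowerSeries.ringHom_apply] using h)
  apply Polynomial.ext
  intro n
  rw [Polynomial.coeff_zero]
  rcases le_or_gt n q.natDegree with hn | hn
  · simpa using this n hn
  · simp [Polynomial.coeff_eq_zero_of_natDegree_lt hn]

lemma psi_eq_zero (q : Polynomial (Polynomial ℚ)) (h : Psi q = 0) : q = 0 := by
  have h2 : Polynomial.eval₂ Polynomial.coeToPowerSeries.ringHom (PowerSeries.exp ℚ)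
      (q.comp (Polynomial.X - 1)) = 0 := by
    rw [Polynomial.eval₂_comp]
    simpa [Polynomial.eval₂_sub, Eps, Psi] using h
  have h3 := psiE_eq_zero _ h2
  have h4 : q = (q.comp (Polynomial.X - 1)).comp (Polynomial.X + 1) := by
    rw [Polynomial.comp_assoc]
    simp [Polynomial.sub_comp]
  rw [h4, h3, Polynomial.zero_comp]

lemma Psi_add (p q : Polynomial (Polynomial ℚ)) : Psi (p + q) = Psi p + Psi q :=
  Polynomial.eval₂_add _ _

lemma Psi_mul (p q : Polynomial (Polynomial ℚ)) : Psi (p * q) = Psi p * Psi q :=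
  Polynomial.eval₂_mul _ _

lemma Psi_sub (p q : Polynomial (Polynomial ℚ)) : Psi (p - q) = Psi p - Psi q :=
  Polynomial.eval₂_sub _

lemma Psi_monomial (k : ℕ) (a : Polynomial ℚ) :
    Psi (Polynomial.monomial k a) = (a : ℚ⟦X⟧) * Eps ^ k := by
  simp [Psi, Polynomial.eval₂_monomial, Polynomial.coeToPowerSeries.ringHom_apply]

lemma Psi_C (a : Polynomial ℚ) : Psi (Polynomial.C a) = (a : ℚ⟦X⟧) := by
  simp [Psi, Polynomial.coeToPowerSeries.ringHom_apply]

lemma Psi_X : Psi Polynomial.X = Eps := Polynomial.eval₂_X _ _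

lemma Psi_one : Psi 1 = 1 := Polynomial.eval₂_one _ _

lemma Psi_zero : Psi 0 = 0 := Polynomial.eval₂_zero _ _

lemma Psi_sum (s : Finset ℕ) (f : ℕ → Polynomial (Polynomial ℚ)) :
    Psi (∑ j ∈ s, f j) = ∑ j ∈ s, Psi (f j) :=
  Polynomial.eval₂_finset_sum _ _ _ _

lemma Psi_pow (n : ℕ) : Psi (Polynomial.X ^ n) = Eps ^ n := by
  induction n with
  | zero => rw [pow_zero, pow_zero]; exact Psi_one
  | succ n ih => rw [pow_succ, Psi_mul, ih, Psi_X, pow_succ]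

lemma Dop_add (f g : ℚ⟦X⟧) : Dop (f + g) = Dop f + Dop g := by
  unfold Dop; rw [PowerSeries.derivativeFun_add, mul_add]

lemma Dop_mul (f g : ℚ⟦X⟧) : Dop (f * g) = Dop f * g + f * Dop g := by
  unfold Dop; rw [PowerSeries.derivativeFun_mul]; simp only [smul_eq_mul]; ring

lemma derivativeFun_Eps : Eps.derivativeFun = PowerSeries.exp ℚ := by
  unfold Eps
  rw [show PowerSeries.exp ℚ - 1 = PowerSeries.exp ℚ + (-1 : ℚ⟦X⟧) by ring,
    PowerSeries.derivativeFun_add, derivativeFun_exp]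
  have h : (-1 : ℚ⟦X⟧).derivativeFun = 0 := by
    ext n; rw [coeff_derivativeFun']
    simp [PowerSeries.coeff_one]
  rw [h, add_zero]

lemma exp_eq_Eps : PowerSeries.exp ℚ = Eps + 1 := by unfold Eps; ring

lemma coe_natCast' (k : ℕ) : (((k : ℚ[X])) : ℚ⟦X⟧) = (k : ℚ⟦X⟧) := by
  rw [← Polynomial.coeToPowerSeries.ringHom_apply, map_natCast]

/-! ### The derivation `D` acts on `ℚ[t][E]` -/

noncomputable def mapD (q : Polynomial (Polynomial ℚ)) : Polynomial (Polynomial ℚ) :=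
  q.sum fun k a => Polynomial.monomial k (Polynomial.X * derivative a)

lemma mapD_add (p q : Polynomial (Polynomial ℚ)) : mapD (p + q) = mapD p + mapD q := by
  unfold mapD
  rw [Polynomial.sum_add_index]
  · intro n; simp
  · intro n a b; rw [Polynomial.derivative_add, mul_add, map_add]

lemma mapD_monomial (k : ℕ) (a : Polynomial ℚ) :
    mapD (Polynomial.monomial k a) = Polynomial.monomial k (Polynomial.X * derivative a) := by
  unfold mapD
  rw [Polynomial.sum_monomial_index]
  simp

noncomputable def Delta (q : Polynomial (Polynomial ℚ)) : Polynomial (Polynomial ℚ) :=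
  mapD q + Polynomial.C Polynomial.X * (Polynomial.X + 1) * derivative q

lemma Delta_add (p q : Polynomial (Polynomial ℚ)) : Delta (p + q) = Delta p + Delta q := by
  unfold Delta
  rw [mapD_add, Polynomial.derivative_add]
  ring

lemma Dop_psi (q : Polynomial (Polynomial ℚ)) : Dop (Psi q) = Psi (Delta q) := by
  induction q using Polynomial.induction_on' with
  | add p q hp hq => rw [Psi_add, Dop_add, hp, hq, Delta_add, Psi_add]
  | monomial k a =>
    unfold Delta
    rw [Psi_monomial, mapD_monomial, Polynomial.derivative_monomial, Psi_add, Psi_monomial]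
    cases k with
    | zero =>
      simp only [Nat.cast_zero, mul_zero, Polynomial.monomial_zero_right, map_zero, mul_zero,
        add_zero, pow_zero, mul_one]
      unfold Dop
      rw [derivativeFun_coe', Polynomial.coe_mul, Polynomial.coe_X, Psi_zero, add_zero]
    | succ k =>
      rw [Nat.add_sub_cancel, Psi_mul, Psi_mul, Psi_C, Psi_add, Psi_X, Psi_one, Psi_monomial]
      unfold Dop
      rw [PowerSeries.derivativeFun_mul, derivativeFun_pow, derivativeFun_Eps,
        derivativeFun_coe', exp_eq_Eps]
      simp only [smul_eq_mul, Polynomial.coe_mul, Polynomial.coe_X, coe_natCast']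
      push_cast
      ring

/-! ### Expansion of `E^(j+1) · D^j g` as a polynomial in `E` -/

lemma key (j : ℕ) : ∃ q : Polynomial (Polynomial ℚ),
    Eps^(j+1) * (Dop^[j] gps) = Psi q ∧
    q.coeff 0 = Polynomial.C ((-1:ℚ)^j * j.factorial) * Polynomial.X^(j+1) := by
  induction j with
  | zero =>
    refine ⟨Polynomial.C Polynomial.X
      + Polynomial.C (Polynomial.C (1/2:ℚ) * Polynomial.X) * Polynomial.X, ?_, ?_⟩
    · have hb : hps * Eps = PowerSeries.X := by
        unfold hps Eps
        exact bernoulliPowerSeries_mul_exp_sub_one ℚ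
      rw [Psi_add, Psi_mul, Psi_C, Psi_C, Psi_X]
      rw [pow_one, Function.iterate_zero_apply]
      unfold gps
      rw [mul_add, mul_comm Eps hps, hb]
      rw [Polynomial.coe_mul, Polynomial.coe_C, Polynomial.coe_X]
      ring
    · simp [Polynomial.coeff_add, Polynomial.mul_coeff_zero, Polynomial.coeff_X_zero]
  | succ j ih =>
    obtain ⟨q, hq, hc⟩ := ih
    have hDpow : Dop (Eps^(j+1)) = ((j:ℚ⟦X⟧)+1) * Eps^j * (PowerSeries.X * PowerSeries.exp ℚ) := by
      unfold Dop
      rw [derivativeFun_pow, derivativeFun_Eps]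
      ring
    refine ⟨Polynomial.X * Delta q
      - Polynomial.C (((j : ℚ[X])+1) * Polynomial.X) * (Polynomial.X + 1) * q, ?_, ?_⟩
    · rw [Function.iterate_succ_apply']
      rw [Psi_sub, Psi_mul, Psi_mul, Psi_mul, Psi_X, Psi_C, Psi_add, Psi_X, Psi_one, ← Dop_psi,
        ← hq, Dop_mul, hDpow]
      rw [Polynomial.coe_mul, Polynomial.coe_add, Polynomial.coe_one, Polynomial.coe_X,
        coe_natCast', exp_eq_Eps]
      ring
    · rw [Polynomial.coeff_sub, Polynomial.mul_coeff_zero, Polynomial.coeff_X_zero, zero_mul,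
        zero_sub, Polynomial.mul_coeff_zero, Polynomial.mul_coeff_zero, Polynomial.coeff_C_zero,
        Polynomial.coeff_add, Polynomial.coeff_X_zero, Polynomial.coeff_one, hc]
      have hj : ((j : ℚ[X])+1) = Polynomial.C ((j:ℚ)+1) := by simp
      rw [hj, show Polynomial.C ((-1:ℚ)^(j+1) * ((j+1).factorial:ℚ))
          = -(Polynomial.C ((j:ℚ)+1) * Polynomial.C ((-1:ℚ)^j * (j.factorial:ℚ))) from by
        rw [← map_mul, ← map_neg]
        congr 1
        push_cast [Nat.factorial_succ]
        ring]
      simp only [if_true]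
      ring

/-! ### Main theorem -/

theorem g_linear_independent (m : ℕ) (p : Polynomial ℚ) (pj : ℕ → Polynomial ℚ)
    (h : (p : PowerSeries ℚ)
      + ∑ j ∈ Finset.range (m + 1), (pj j : PowerSeries ℚ) * Dop^[j] gps = 0) :
    p = 0 ∧ ∀ j ≤ m, pj j = 0 := by
  have H := fun j => key j
  choose q hq hc using H
  set Q : Polynomial (Polynomial ℚ) :=
    Polynomial.C p * Polynomial.X^(m+1)
      + ∑ j ∈ range (m+1), Polynomial.C (pj j) * (Polynomial.X^(m-j) * q j) with hQdef
  have hPsiQ : Psi Q = 0 := by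
    rw [hQdef, Psi_add, Psi_mul, Psi_C, Psi_pow, Psi_sum]
    have : ∀ j ∈ range (m+1),
        Psi (Polynomial.C (pj j) * (Polynomial.X^(m-j) * q j))
          = Eps^(m+1) * ((pj j : ℚ⟦X⟧) * Dop^[j] gps) := by
      intro j hj
      rw [Psi_mul, Psi_mul, Psi_C, Psi_pow, ← hq j]
      rw [show Eps^(m-j) * (Eps^(j+1) * Dop^[j] gps) = Eps^(m-j+(j+1)) * Dop^[j] gps from by
        rw [pow_add]; ring]
      rw [show m - j + (j + 1) = m + 1 from by have := Finset.mem_range.mp hj; omega]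
      ring
    rw [Finset.sum_congr rfl this, ← Finset.mul_sum]
    have : (p : ℚ⟦X⟧) * Eps^(m+1) + Eps^(m+1) * ∑ j ∈ range (m+1), (pj j : ℚ⟦X⟧) * Dop^[j] gps
        = Eps^(m+1) * ((p : ℚ⟦X⟧) + ∑ j ∈ range (m+1), (pj j : ℚ⟦X⟧) * Dop^[j] gps) := by ring
    rw [this, h, mul_zero]
  have hQ0 : Q = 0 := psi_eq_zero Q hPsiQ
  have claim : ∀ i, i ≤ m → pj (m - i) = 0 := by
    intro i
    induction i using Nat.strong_induction_on with
    | _ i IH =>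
      intro him
      have h0 : Q.coeff i = 0 := by rw [hQ0, Polynomial.coeff_zero]
      rw [hQdef, Polynomial.coeff_add, Polynomial.coeff_C_mul, Polynomial.coeff_X_pow,
        Polynomial.finset_sum_coeff] at h0
      simp only [Polynomial.coeff_C_mul, Polynomial.coeff_X_pow_mul'] at h0
      rw [if_neg (by omega), mul_zero, zero_add] at h0
      have hsum : ∑ j ∈ range (m+1),
          pj j * (if m - j ≤ i then (q j).coeff (i - (m-j)) else 0)
          = pj (m-i) * (q (m-i)).coeff 0 := by
        have hterm : ∀ j ∈ range (m+1),
            pj j * (if m - j ≤ i then (q j).coeff (i - (m-j)) else 0)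
              = (if j = m - i then pj j * (q j).coeff 0 else 0) := by
          intro j hj
          have hjm := Finset.mem_range.mp hj
          by_cases hji : j = m - i
          · subst hji
            rw [if_pos rfl, if_pos (by omega : m - (m - i) ≤ i),
              show i - (m - (m - i)) = 0 from by omega]
          · rw [if_neg hji]
            by_cases hle : m - j ≤ i
            · have hj0 : pj j = 0 := by
                have h1 : m - j < i := by omega
                have := IH (m - j) h1 (by omega)
                rwa [Nat.sub_sub_self (by omega : j ≤ m)] at this
              rw [hj0, zero_mul]
            · rw [if_neg hle, mul_zero]
        rw [Finset.sum_congr rfl hterm,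
          Finset.sum_ite_eq' (range (m+1)) (m-i) (fun j => pj j * (q j).coeff 0),
          if_pos (Finset.mem_range.mpr (by omega))]
      rw [hsum, hc] at h0
      have hne : Polynomial.C ((-1:ℚ)^(m-i) * ((m-i).factorial:ℚ))
          * Polynomial.X^(m-i+1) ≠ 0 := by
        apply mul_ne_zero
        · exact Polynomial.C_ne_zero.mpr (mul_ne_zero (pow_ne_zero _ (by norm_num))
            (Nat.cast_ne_zero.mpr (Nat.factorial_ne_zero _)))
        · exact pow_ne_zero _ Polynomial.X_ne_zero
      rcases mul_eq_zero.mp h0 with h' | h'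
      · exact h'
      · exact absurd h' hne
  have hpj : ∀ j ≤ m, pj j = 0 := by
    intro j hj
    have := claim (m - j) (by omega)
    rwa [Nat.sub_sub_self hj] at this
  have hsz : ∑ j ∈ range (m+1), ((pj j : ℚ⟦X⟧)) * Dop^[j] gps = 0 :=
    Finset.sum_eq_zero fun j hj => by
      rw [hpj j (Nat.lt_succ_iff.mp (Finset.mem_range.mp hj)), Polynomial.coe_zero, zero_mul]
  rw [hsz, add_zero] at h
  exact ⟨coe_inj' h, hpj⟩
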